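/- The matrices g_{ij} = E_{ij} + E_{ji} for pairs (i,j) with 1 ≤ j ≤ i ≤ m, excluding one fixed off-diagonal pair, form a basis of the quotient space of log-reversible m×m matrices modulo the subspace N = {(x,x') ↦ f(x') − f(x) + c}. In particular this quotient has dimension m(m+1)/2 − 1. -/

import Mathlib

/-- The subspace N of matrices of the form (x,x') ↦ f(x') - f(x) + c. -/
def nSub (m : ℕ) : Submodule ℝ (Matrix (Fin m) (Fin m) ℝ) where
  carrier := {g | ∃ (f : Fin m → ℝ) (c : ℝ), ∀ i j, g i j = f j - f i + c}
  add_mem' := by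
    rintro a b ⟨f, c, hf⟩ ⟨g, d, hg⟩
    exact ⟨f + g, c + d, fun i j => by
      simp [Matrix.add_apply, hf i j, hg i j]; ring⟩
  zero_mem' := ⟨0, 0, fun i j => by simp⟩
  smul_mem' := by
    rintro r a ⟨f, c, hf⟩
    exact ⟨r • f, r * c, fun i j => by
      simp [Matrix.smul_apply, hf i j]; ring⟩

/-- The subspace of log-reversible matrices. -/
def logRevSub (m : ℕ) : Submodule ℝ (Matrix (Fin m) (Fin m) ℝ) where
  carrier := {g | ∃ f : Fin m → ℝ, ∀ i j, g i j = g j i + f j - f i}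
  add_mem' := by
    rintro a b ⟨f, hf⟩ ⟨g, hg⟩
    exact ⟨f + g, fun i j => by
      simp [Matrix.add_apply, hf i j, hg i j]; ring⟩
  zero_mem' := ⟨0, fun i j => by simp⟩
  smul_mem' := by
    rintro r a ⟨f, hf⟩
    refine ⟨r • f, fun i j => ?_⟩
    have := hf i j
    simp only [Matrix.smul_apply, Pi.smul_apply, smul_eq_mul]
    rw [this]; ring

/-- The symmetric matrix units g_{ij} = E_{ij} + E_{ji}. -/
def gMat (m : ℕ) (p : Fin m × Fin m) : Matrix (Fin m) (Fin m) ℝ :=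
  Matrix.single p.1 p.2 1 + Matrix.single p.2 p.1 1

lemma gMat_entry (m : ℕ) (p : Fin m × Fin m) (i j : Fin m) :
    gMat m p i j = (if p = (i, j) then (1:ℝ) else 0) + (if p = (j, i) then 1 else 0) := by
  simp [gMat, Matrix.single, Prod.ext_iff, and_comm]

lemma gMat_swap (m : ℕ) (p : Fin m × Fin m) : gMat m p.swap = gMat m p := by
  ext i j
  simp only [gMat_entry, Prod.swap_eq_iff_eq_swap, Prod.swap_prod_mk]
  ring

lemma sum_smul_gMat (m : ℕ) (S : Matrix (Fin m) (Fin m) ℝ) (hS : ∀ i j, S i j = S j i) :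
    ∑ p : Fin m × Fin m, S p.1 p.2 • gMat m p = (2:ℝ) • S := by
  ext i j
  simp only [Matrix.sum_apply, Matrix.smul_apply, gMat_entry, smul_eq_mul, mul_add, mul_ite,
    mul_one, mul_zero, Finset.sum_add_distrib, Finset.sum_ite_eq', Finset.mem_univ, if_true]
  rw [hS j i]; ring

/-- The images of the matrices g_{ij} = E_{ij} + E_{ji}, for
j ≤ i excluding the fixed pair (m,1) (indices (m-1, 0) in Fin m), form a basis
of the quotient of the space of log-reversible matrices by N; in particular
this quotient has dimension m(m+1)/2 - 1. -/
theorem reversible_basis (m : ℕ) (hm : 2 ≤ m) :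
    let T := {p : Fin m × Fin m //
      p.2 ≤ p.1 ∧ p ≠ ((⟨m - 1, by omega⟩ : Fin m), (⟨0, by omega⟩ : Fin m))}
    let v : T → (Matrix (Fin m) (Fin m) ℝ) ⧸ nSub m :=
      fun p => (nSub m).mkQ (gMat m p.1)
    LinearIndependent ℝ v ∧
    Submodule.span ℝ (Set.range v) =
      Submodule.map (nSub m).mkQ (logRevSub m) ∧
    Nat.card T = m * (m + 1) / 2 - 1 := by
  intro T v
  have hm1 : m - 1 < m := by omega
  have h0m : 0 < m := by omega
  set e : Fin m × Fin m := (⟨m - 1, hm1⟩, ⟨0, h0m⟩) with he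
  -- basic facts about exclusions
  have hswap_ne : ∀ t : T, (t : Fin m × Fin m) ≠ e.swap := by
    rintro t h
    have h1 := t.2.1
    rw [h] at h1
    simp only [he, Prod.swap_prod_mk, Fin.mk_le_mk] at h1
    omega
  have ht_ne : ∀ t : T, (t : Fin m × Fin m) ≠ e := fun t => t.2.2
  refine ⟨?_, ?_, ?_⟩
  · -- linear independence
    rw [Fintype.linearIndependent_iff]
    intro g hg t
    set S : Matrix (Fin m) (Fin m) ℝ := ∑ i : T, g i • gMat m i.1 with hS
    have hq : (nSub m).mkQ S = 0 := by
      rw [hS, map_sum]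
      simp only [map_smul]
      exact hg
    have hmem : S ∈ nSub m := by
      rwa [Submodule.mkQ_apply, Submodule.Quotient.mk_eq_zero] at hq
    obtain ⟨f, c, hf⟩ := hmem
    have hsymm : ∀ i j, S i j = S j i := by
      intro i j
      rw [hS]
      simp only [Matrix.sum_apply, Matrix.smul_apply, gMat_entry, smul_eq_mul]
      exact Finset.sum_congr rfl fun t _ => by ring
    have hSc : ∀ i j, S i j = c := by
      intro i j
      have h1 := hf i j
      have h2 := hf j i
      have h3 := hsymm i j
      linarith
    have hz : S e.1 e.2 = 0 := by
      rw [hS, Matrix.sum_apply]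
      apply Finset.sum_eq_zero
      intro t _
      have h1 : (t : Fin m × Fin m) ≠ (e.1, e.2) := ht_ne t
      have h2 : (t : Fin m × Fin m) ≠ (e.2, e.1) := hswap_ne t
      simp [gMat_entry, h1, h2]
    have hc0 : c = 0 := by rw [← hSc e.1 e.2]; exact hz
    have ht0 : S (t : Fin m × Fin m).1 (t : Fin m × Fin m).2 = 0 := by
      rw [hSc, hc0]
    rw [hS, Matrix.sum_apply] at ht0
    rw [Finset.sum_eq_single_of_mem t (Finset.mem_univ t)] at ht0
    · simp only [Matrix.smul_apply, gMat_entry, smul_eq_mul] at ht0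
      split_ifs at ht0 <;> linarith
    · intro b _ hbt
      have hb : (b : Fin m × Fin m) ≠ ((t : Fin m × Fin m).1, (t : Fin m × Fin m).2) := by
        exact fun h => hbt (Subtype.ext h)
      have hb2 : (b : Fin m × Fin m) ≠ ((t : Fin m × Fin m).2, (t : Fin m × Fin m).1) := by
        intro h
        have hb1 := b.2.1
        rw [h] at hb1
        have ht1 := t.2.1
        have heq : (t : Fin m × Fin m).1 = (t : Fin m × Fin m).2 := le_antisymm hb1 ht1
        apply hb
        rw [h, heq]
      simp [gMat_entry, hb, hb2]
  · -- span equality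
    set W := Submodule.span ℝ (Set.range v) with hW
    have easy : ∀ a b : Fin m, b ≤ a → (a, b) ≠ e → (nSub m).mkQ (gMat m (a, b)) ∈ W := by
      intro a b hle hne
      exact Submodule.subset_span ⟨⟨(a, b), hle, hne⟩, rfl⟩
    have hne_all : ∀ p : Fin m × Fin m, p ≠ e → p ≠ e.swap → (nSub m).mkQ (gMat m p) ∈ W := by
      intro p h1 h2
      rcases le_total p.2 p.1 with hle | hle
      · have := easy p.1 p.2 hle (by rw [Prod.mk.eta]; exact h1)
        rwa [Prod.mk.eta] at this
      · have := easy p.2 p.1 hle (by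
          intro hh
          exact h2 (by rw [← hh]; exact (Prod.swap_swap p).symm))
        rwa [show ((p.2, p.1) : Fin m × Fin m) = p.swap from rfl, gMat_swap] at this
    have hJ : (∑ p : Fin m × Fin m, gMat m p) ∈ nSub m := by
      refine ⟨0, 2, fun i j => ?_⟩
      simp only [Matrix.sum_apply, gMat_entry, Finset.sum_add_distrib,
        Finset.sum_ite_eq', Finset.mem_univ, if_true, Pi.zero_apply]
      norm_num
    have hee : e ≠ e.swap := by
      intro hh
      have := congrArg (fun q : Fin m × Fin m => (q.1 : Fin m).val) hh
      simp only [he, Prod.swap_prod_mk] at this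
      omega
    set sfin : Finset (Fin m × Fin m) := Finset.univ \ {e, e.swap} with hsfin
    have hsplit : (∑ p : Fin m × Fin m, gMat m p) =
        (∑ p ∈ sfin, gMat m p) + (gMat m e + gMat m e.swap) := by
      rw [← Finset.sum_pair hee, hsfin, Finset.sum_sdiff (Finset.subset_univ _)]
    have hexc : (nSub m).mkQ (gMat m e) ∈ W := by
      have hq0 : (nSub m).mkQ (∑ p : Fin m × Fin m, gMat m p) = 0 := by
        rw [Submodule.mkQ_apply, Submodule.Quotient.mk_eq_zero]; exact hJ
      have hq := congrArg (nSub m).mkQ hsplit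
      rw [hq0, map_add, map_add, map_sum, gMat_swap] at hq
      have hxx : (nSub m).mkQ (gMat m e) + (nSub m).mkQ (gMat m e) =
          -(∑ p ∈ sfin, (nSub m).mkQ (gMat m p)) :=
        eq_neg_of_add_eq_zero_right hq.symm
      have hsum_mem : (∑ p ∈ sfin, (nSub m).mkQ (gMat m p)) ∈ W := by
        apply Submodule.sum_mem
        intro p hp
        simp only [hsfin, Finset.mem_sdiff, Finset.mem_insert, Finset.mem_singleton,
          not_or] at hp
        exact hne_all p hp.2.1 hp.2.2
      have key : (nSub m).mkQ (gMat m e) =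
          (2⁻¹ : ℝ) • (-(∑ p ∈ sfin, (nSub m).mkQ (gMat m p))) := by
        rw [← hxx, ← two_smul ℝ, smul_smul]
        norm_num
      rw [key]
      exact Submodule.smul_mem _ _ (Submodule.neg_mem _ hsum_mem)
    have lemA : ∀ p : Fin m × Fin m, (nSub m).mkQ (gMat m p) ∈ W := by
      intro p
      rcases eq_or_ne p e with rfl | h1
      · exact hexc
      rcases eq_or_ne p e.swap with rfl | h2
      · rw [gMat_swap]; exact hexc
      · exact hne_all p h1 h2
    apply le_antisymm
    · rw [Submodule.span_le]
      rintro x ⟨t, rfl⟩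
      exact ⟨gMat m t.1, ⟨0, fun i j => by
        rw [gMat_entry, gMat_entry]; simp; ring⟩, rfl⟩
    · rintro x ⟨h, ⟨f, hf⟩, rfl⟩
      set S : Matrix (Fin m) (Fin m) ℝ :=
        h - Matrix.of (fun i j => (f j - f i) / 2) with hSdef
      have hSsym : ∀ i j, S i j = S j i := by
        intro i j
        have := hf i j
        simp only [hSdef, Matrix.sub_apply, Matrix.of_apply]
        rw [this]; ring
      have hmk : (nSub m).mkQ h = (nSub m).mkQ S := by
        rw [Submodule.mkQ_apply, Submodule.mkQ_apply, Submodule.Quotient.eq]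
        refine ⟨fun i => f i / 2, 0, fun i j => ?_⟩
        simp only [hSdef, Matrix.sub_apply, Matrix.of_apply]
        ring
      rw [hmk]
      have hsum : (2:ℝ) • S = ∑ p : Fin m × Fin m, S p.1 p.2 • gMat m p :=
        (sum_smul_gMat m S hSsym).symm
      have key : (nSub m).mkQ S =
          (2⁻¹ : ℝ) • ∑ p : Fin m × Fin m, S p.1 p.2 • (nSub m).mkQ (gMat m p) := by
        calc (nSub m).mkQ S = (2⁻¹ : ℝ) • (nSub m).mkQ ((2:ℝ) • S) := by
              rw [← map_smul, smul_smul]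
              norm_num
          _ = (2⁻¹ : ℝ) • ∑ p : Fin m × Fin m, S p.1 p.2 • (nSub m).mkQ (gMat m p) := by
              rw [hsum, map_sum]
              simp only [map_smul]
      rw [key]
      exact Submodule.smul_mem _ _ (Submodule.sum_mem _ fun p _ =>
        Submodule.smul_mem _ _ (lemA p))
  · -- cardinality
    show Nat.card {p : Fin m × Fin m // p.2 ≤ p.1 ∧ p ≠ e} = m * (m + 1) / 2 - 1
    have hememb : e ∈ Finset.univ.filter fun p : Fin m × Fin m => p.2 ≤ p.1 := by
      simp only [Finset.mem_filter, Finset.mem_univ, true_and, he]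
      exact Fin.mk_le_mk.mpr (by omega)
    have hfe : (Finset.univ.filter fun p : Fin m × Fin m => p.2 ≤ p.1 ∧ p ≠ e) =
        (Finset.univ.filter fun p : Fin m × Fin m => p.2 ≤ p.1).erase e := by
      ext p
      simp only [Finset.mem_filter, Finset.mem_univ, true_and, Finset.mem_erase]
      tauto
    have hinner : ∀ a : Fin m, (∑ b : Fin m, if b ≤ a then (1:ℕ) else 0) = (a : ℕ) + 1 := by
      intro a
      rw [← Finset.card_filter]
      have h1 : (Finset.univ.filter fun b : Fin m => b ≤ a) = Finset.Iic a := by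
        ext b; simp
      rw [h1, Fin.card_Iic]
    have hcard : (Finset.univ.filter fun p : Fin m × Fin m => p.2 ≤ p.1).card =
        m * (m + 1) / 2 := by
      rw [Finset.card_filter, Fintype.sum_prod_type]
      calc (∑ a : Fin m, ∑ b : Fin m, if b ≤ a then (1:ℕ) else 0)
          = ∑ a : Fin m, ((a : ℕ) + 1) := Finset.sum_congr rfl fun a _ => hinner a
        _ = (∑ a ∈ Finset.range m, a) + m := by
            rw [Fin.sum_univ_eq_sum_range (fun i => i + 1) m, Finset.sum_add_distrib]
            simp
        _ = m * (m + 1) / 2 := by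
            have h2 := Finset.sum_range_id_mul_two m
            have h3 : m * (m + 1) = m * (m - 1) + 2 * m := by
              cases m with
              | zero => simp
              | succ n => simp [Nat.succ_sub_one]; ring
            omega
    rw [Nat.card_eq_fintype_card, Fintype.card_subtype, hfe,
      Finset.card_erase_of_mem hememb, hcard]
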